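/- Let x : Fin h × Fin w × T → {0,1} satisfy the maximum-rectangular-tiling constraints: (i) for every color ℓ and vertically consecutive cells, ∑_{k, s(k)=ℓ} x(i,j,k) − ∑_{k, n(k)=ℓ} x(i+1,j,k) ≥ 0; (ii) for every color ℓ and horizontally consecutive cells, ∑_{k, e(k)=ℓ} x(i,j,k) − ∑_{k, w(k)=ℓ} x(i,j+1,k) ≥ 0; (iii) for every 2×2 block of cells, ∑_k x(i+1,j,k) + ∑_k x(i,j+1,k) − ∑_k x(i+1,j+1,k) ≤ 1; (iv) ∑_k x(1,1,k) = 1 at the top-left cell; and (v) ∑_k x(i,j,k) ≤ 1 at every other cell. Then the set S of occupied cells (those with ∑_k x(i,j,k) = 1) equals {1,…,a} × {1,…,b} for some 1 ≤ a ≤ h and 1 ≤ b ≤ w, and the induced tiling on S (assigning to each occupied cell its unique tile) is a valid tiling of this a×b rectangle. -/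
import Mathlib

/-- Occupancy predicate: cell (i,j) carries exactly one tile. -/
def occP {T : Type} [Fintype T] {h w : ℕ} (x : Fin h → Fin w → T → ℕ) (i j : ℕ) : Prop :=
  ∃ (hi : i < h) (hj : j < w), (∑ k : T, x ⟨i, hi⟩ ⟨j, hj⟩ k) = 1

/-- feasible solutions of the maximum rectangular valid tiling program (13)
occupy exactly an a×b rectangle anchored at the top-left corner, and the induced tiling
of that rectangle is valid. -/
theorem stmt_3 {C T : Type} [Fintype T] [DecidableEq C]
    {h w : ℕ} (hh : 0 < h) (hw : 0 < w)
    (tn tw ts te : T → C)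
    (x : Fin h → Fin w → T → ℕ)
    (hx : ∀ i j k, x i j k = 0 ∨ x i j k = 1)
    (h1 : ∀ (i : Fin h) (j : Fin w) (hi : i.val + 1 < h) (ℓ : C),
      (∑ k : T, if tn k = ℓ then x ⟨i.val + 1, hi⟩ j k else 0) ≤
        ∑ k : T, if ts k = ℓ then x i j k else 0)
    (h2 : ∀ (i : Fin h) (j : Fin w) (hj : j.val + 1 < w) (ℓ : C),
      (∑ k : T, if tw k = ℓ then x i ⟨j.val + 1, hj⟩ k else 0) ≤
        ∑ k : T, if te k = ℓ then x i j k else 0)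
    (h3 : ∀ (i : Fin h) (j : Fin w) (hi : i.val + 1 < h) (hj : j.val + 1 < w),
      (∑ k : T, x ⟨i.val + 1, hi⟩ j k) + (∑ k : T, x i ⟨j.val + 1, hj⟩ k) ≤
        1 + ∑ k : T, x ⟨i.val + 1, hi⟩ ⟨j.val + 1, hj⟩ k)
    (h4 : (∑ k : T, x ⟨0, hh⟩ ⟨0, hw⟩ k) = 1)
    (h5 : ∀ i j, (∑ k : T, x i j k) ≤ 1) :
    ∃ a b : ℕ, 1 ≤ a ∧ a ≤ h ∧ 1 ≤ b ∧ b ≤ w ∧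
      (∀ (i : Fin h) (j : Fin w),
        (∑ k : T, x i j k) = 1 ↔ (i.val < a ∧ j.val < b)) ∧
      (∀ (i : Fin h) (j : Fin w) (hi : i.val + 1 < h) (p q : T),
        x i j p = 1 → x ⟨i.val + 1, hi⟩ j q = 1 → ts p = tn q) ∧
      (∀ (i : Fin h) (j : Fin w) (hj : j.val + 1 < w) (p q : T),
        x i j p = 1 → x i ⟨j.val + 1, hj⟩ q = 1 → te p = tw q) := by
  classical
  -- basic facts
  have hsum1 : ∀ (i : Fin h) (j : Fin w) (p : T), x i j p = 1 → (∑ k : T, x i j k) = 1 := by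
    intro i j p hp
    have h1' : 1 ≤ ∑ k : T, x i j k := by
      calc 1 = x i j p := hp.symm
        _ ≤ ∑ k : T, x i j k :=
          Finset.single_le_sum (fun k _ => Nat.zero_le _) (Finset.mem_univ p)
    exact le_antisymm (h5 i j) h1'
  have huniq : ∀ (i : Fin h) (j : Fin w) (p q : T), x i j p = 1 → x i j q = 1 → p = q := by
    intro i j p q hp hq
    by_contra hne
    have hle : x i j p + x i j q ≤ ∑ k : T, x i j k := by
      rw [← Finset.sum_pair hne]
      exact Finset.sum_le_sum_of_subset (Finset.subset_univ _)
    have := h5 i j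
    omega
  -- vertical propagation with color matching
  have hvert : ∀ (i : Fin h) (j : Fin w) (hi : i.val + 1 < h) (q : T),
      x ⟨i.val + 1, hi⟩ j q = 1 → ∃ p, x i j p = 1 ∧ ts p = tn q := by
    intro i j hi q hq
    have hle := h1 i j hi (tn q)
    have hlhs : 1 ≤ ∑ k : T, if tn k = tn q then x ⟨i.val + 1, hi⟩ j k else 0 := by
      calc 1 = (if tn q = tn q then x ⟨i.val + 1, hi⟩ j q else 0) := by simp [hq]
        _ ≤ _ := Finset.single_le_sum
          (f := fun k => if tn k = tn q then x ⟨i.val + 1, hi⟩ j k else 0)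
          (fun k _ => Nat.zero_le _) (Finset.mem_univ q)
    have hrhs : (∑ k : T, if ts k = tn q then x i j k else 0) ≠ 0 := by omega
    obtain ⟨p, -, hp⟩ := Finset.exists_ne_zero_of_sum_ne_zero hrhs
    by_cases hts : ts p = tn q
    · refine ⟨p, ?_, hts⟩
      rcases hx i j p with h0 | h1'
      · simp [hts, h0] at hp
      · exact h1'
    · simp [hts] at hp
  -- horizontal propagation with color matching
  have hhor : ∀ (i : Fin h) (j : Fin w) (hj : j.val + 1 < w) (q : T),
      x i ⟨j.val + 1, hj⟩ q = 1 → ∃ p, x i j p = 1 ∧ te p = tw q := by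
    intro i j hj q hq
    have hle := h2 i j hj (tw q)
    have hlhs : 1 ≤ ∑ k : T, if tw k = tw q then x i ⟨j.val + 1, hj⟩ k else 0 := by
      calc 1 = (if tw q = tw q then x i ⟨j.val + 1, hj⟩ q else 0) := by simp [hq]
        _ ≤ _ := Finset.single_le_sum
          (f := fun k => if tw k = tw q then x i ⟨j.val + 1, hj⟩ k else 0)
          (fun k _ => Nat.zero_le _) (Finset.mem_univ q)
    have hrhs : (∑ k : T, if te k = tw q then x i j k else 0) ≠ 0 := by omega
    obtain ⟨p, -, hp⟩ := Finset.exists_ne_zero_of_sum_ne_zero hrhs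
    by_cases hts : te p = tw q
    · refine ⟨p, ?_, hts⟩
      rcases hx i j p with h0 | h1'
      · simp [hts, h0] at hp
      · exact h1'
    · simp [hts] at hp
  have hex : ∀ (i : Fin h) (j : Fin w), (∑ k : T, x i j k) = 1 → ∃ p, x i j p = 1 := by
    intro i j hs
    have : (∑ k : T, x i j k) ≠ 0 := by omega
    obtain ⟨p, -, hp⟩ := Finset.exists_ne_zero_of_sum_ne_zero this
    rcases hx i j p with h0 | h1'
    · exact absurd h0 hp
    · exact ⟨p, h1'⟩
  -- occupancy lemmas
  have hP00 : occP x 0 0 := ⟨hh, hw, h4⟩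
  have hPdown : ∀ i j, occP x (i + 1) j → occP x i j := by
    rintro i j ⟨hi1, hj, hs⟩
    have hi : i < h := by omega
    obtain ⟨q, hq⟩ := hex _ _ hs
    obtain ⟨p, hp, -⟩ := hvert ⟨i, hi⟩ ⟨j, hj⟩ hi1 q hq
    exact ⟨hi, hj, hsum1 _ _ _ hp⟩
  have hPleft : ∀ i j, occP x i (j + 1) → occP x i j := by
    rintro i j ⟨hi, hj1, hs⟩
    have hj : j < w := by omega
    obtain ⟨q, hq⟩ := hex _ _ hs
    obtain ⟨p, hp, -⟩ := hhor ⟨i, hi⟩ ⟨j, hj⟩ hj1 q hq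
    exact ⟨hi, hj, hsum1 _ _ _ hp⟩
  have hcorner : ∀ i j, occP x (i + 1) j → occP x i (j + 1) → occP x (i + 1) (j + 1) := by
    rintro i j ⟨hi1, hj, hs1⟩ ⟨hi, hj1, hs2⟩
    have h3' : (∑ k : T, x ⟨i + 1, hi1⟩ ⟨j, hj⟩ k) + (∑ k : T, x ⟨i, hi⟩ ⟨j + 1, hj1⟩ k) ≤
        1 + ∑ k : T, x ⟨i + 1, hi1⟩ ⟨j + 1, hj1⟩ k := h3 ⟨i, hi⟩ ⟨j, hj⟩ hi1 hj1
    have h5' := h5 ⟨i + 1, hi1⟩ ⟨j + 1, hj1⟩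
    refine ⟨hi1, hj1, ?_⟩
    omega
  have hPmV : ∀ d i j, occP x (i + d) j → occP x i j := by
    intro d
    induction d with
    | zero => intro i j hp; exact hp
    | succ d ih => intro i j hp; exact ih i j (hPdown (i + d) j hp)
  have hPmH : ∀ d i j, occP x i (j + d) → occP x i j := by
    intro d
    induction d with
    | zero => intro i j hp; exact hp
    | succ d ih => intro i j hp; exact ih i j (hPleft i (j + d) hp)
  -- define a and b
  have hEa : ∃ n, ¬ occP x n 0 := ⟨h, fun hp => by obtain ⟨hi, -, -⟩ := hp; omega⟩
  have hEb : ∃ n, ¬ occP x 0 n := ⟨w, fun hp => by obtain ⟨-, hj, -⟩ := hp; omega⟩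
  set a := Nat.find hEa with ha_def
  set b := Nat.find hEb with hb_def
  have haP : ∀ i, i < a → occP x i 0 := fun i hi => not_not.mp (Nat.find_min hEa hi)
  have hbP : ∀ j, j < b → occP x 0 j := fun j hj => not_not.mp (Nat.find_min hEb hj)
  have hiltA : ∀ i j, occP x i j → i < a := by
    intro i j hp
    by_contra hcon
    push_neg at hcon
    have hp0 : occP x i 0 := by
      have : occP x i (0 + j) := by rwa [Nat.zero_add]
      exact hPmH j i 0 this
    have : occP x (a + (i - a)) 0 := by rwa [show a + (i - a) = i by omega]
    exact Nat.find_spec hEa (hPmV _ a 0 this)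
  have hjltB : ∀ i j, occP x i j → j < b := by
    intro i j hp
    by_contra hcon
    push_neg at hcon
    have hp0 : occP x 0 j := by
      have : occP x (0 + i) j := by rwa [Nat.zero_add]
      exact hPmV i 0 j this
    have : occP x 0 (b + (j - b)) := by rwa [show b + (j - b) = j by omega]
    exact Nat.find_spec hEb (hPmH _ 0 b this)
  have hfull : ∀ i, i < a → ∀ j, j < b → occP x i j := by
    intro i
    induction i with
    | zero => intro _ j hj; exact hbP j hj
    | succ i ih =>
      intro hia j
      induction j with
      | zero => intro _; exact haP _ hia
      | succ j ihj =>
        intro hjb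
        exact hcorner i j (ihj (by omega)) (ih (by omega) (j + 1) hjb)
  have ha1 : 1 ≤ a := by
    rcases Nat.eq_zero_or_pos a with h0 | hpos
    · have hsa : ¬ occP x a 0 := Nat.find_spec hEa
      rw [h0] at hsa
      exact absurd hP00 hsa
    · omega
  have hb1 : 1 ≤ b := by
    rcases Nat.eq_zero_or_pos b with h0 | hpos
    · have hsb : ¬ occP x 0 b := Nat.find_spec hEb
      rw [h0] at hsb
      exact absurd hP00 hsb
    · omega
  have hah : a ≤ h := Nat.find_le (fun hp => by obtain ⟨hi, -, -⟩ := hp; omega)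
  have hbw : b ≤ w := Nat.find_le (fun hp => by obtain ⟨-, hj, -⟩ := hp; omega)
  refine ⟨a, b, ha1, hah, hb1, hbw, ?_, ?_, ?_⟩
  · intro i j
    constructor
    · intro hs
      have hp : occP x i.val j.val := ⟨i.isLt, j.isLt, hs⟩
      exact ⟨hiltA _ _ hp, hjltB _ _ hp⟩
    · rintro ⟨hia, hjb⟩
      obtain ⟨hi, hj, hs⟩ := hfull i.val hia j.val hjb
      exact hs
  · intro i j hi p q hp hq
    obtain ⟨p', hp', he⟩ := hvert i j hi q hq
    exact (huniq i j p p' hp hp') ▸ he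
  · intro i j hj p q hp hq
    obtain ⟨p', hp', he⟩ := hhor i j hj q hq
    exact (huniq i j p p' hp hp') ▸ he
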